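/- Let A be a finite alphabet with at least 2 letters and φ : A* → A* a primitive substitution that is unimodular, i.e., det(M(φ)) = 1 or −1. Then φ is aperiodic: there is no nonempty word w ∈ A* such that every word in the language L(φ) is a factor of some power w^k of w. -/

import Mathlib

/-- `u` is a factor of `v`: `u` occurs as a contiguous subword of `v`. -/
def IsFactor {A : Type*} (u v : FreeMonoid A) : Prop :=
  ∃ s t : FreeMonoid A, v = s * u * t

namespace AperiodicPrim

variable {A : Type} [DecidableEq A]

def pw (x : List A) : ℕ → List A
  | 0 => []
  | k+1 => x ++ pw x k

omit [DecidableEq A] in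
lemma pw_succ' (x : List A) (k : ℕ) : pw x (k+1) = pw x k ++ x := by
  induction k with
  | zero => simp [pw]
  | succ k ih =>
      show x ++ pw x (k+1) = (x ++ pw x k) ++ x
      rw [ih, List.append_assoc]

omit [DecidableEq A] in
lemma length_pw (x : List A) (k : ℕ) : (pw x k).length = k * x.length := by
  induction k with
  | zero => simp [pw]
  | succ k ih => simp [pw, ih]; ring

lemma count_pw (x : List A) (k : ℕ) (b : A) : (pw x k).count b = k * x.count b := by
  induction k with
  | zero => simp [pw]
  | succ k ih => simp [pw, List.count_append, ih]; ring

omit [DecidableEq A] in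
lemma toList_pow (w : FreeMonoid A) (k : ℕ) : (w^k).toList = pw w.toList k := by
  induction k with
  | zero => rfl
  | succ k ih => rw [pow_succ', show (w * w^k).toList = w.toList ++ (w^k).toList from rfl, ih]; rfl

omit [DecidableEq A] in
lemma isFactor_toList {u v : FreeMonoid A} (h : IsFactor u v) : u.toList <:+: v.toList := by
  obtain ⟨s, t, rfl⟩ := h
  exact ⟨s.toList, t.toList, rfl⟩

omit [DecidableEq A] in
lemma trim (x : List A) :
    ∀ k (l : List A), l <:+: pw x k →
      ∃ k', k' * x.length ≤ l.length + 2 * x.length ∧ l <:+: pw x k' := by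
  intro k
  induction k using Nat.strong_induction_on with
  | _ k ih =>
    intro l hl
    by_cases hk : k * x.length ≤ l.length + 2 * x.length
    · exact ⟨k, hk, hl⟩
    · push_neg at hk
      obtain ⟨s, t, hst⟩ := hl
      have hlen : s.length + (l.length + t.length) = k * x.length := by
        have := congrArg List.length hst
        simpa [length_pw] using this
      obtain ⟨k0, rfl⟩ : ∃ k0, k = k0 + 1 := by
        rcases k with _ | k0
        · exfalso; simp at hk
        · exact ⟨k0, rfl⟩
      have hcase : x.length ≤ s.length ∨ x.length ≤ t.length := by
        generalize hK : (k0+1) * x.length = K at hlen hk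
        omega
      rcases hcase with hs | ht
      · have hpre_s : s <+: pw x (k0+1) := ⟨l ++ t, by rw [← hst]; simp [List.append_assoc]⟩
        have hpre_x : x <+: pw x (k0+1) := ⟨pw x k0, rfl⟩
        obtain ⟨s2, rfl⟩ := List.prefix_of_prefix_length_le hpre_x hpre_s hs
        have hkey : s2 ++ (l ++ t) = pw x k0 := by
          have h : (x ++ s2) ++ l ++ t = x ++ pw x k0 := hst
          simpa [List.append_assoc] using h
        obtain ⟨k', h1, h2⟩ := ih k0 (by omega) l
          ⟨s2, t, by simpa [List.append_assoc] using hkey⟩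
        exact ⟨k', h1, h2⟩
      · have hsuf_t : t <:+ pw x (k0+1) := ⟨s ++ l, by rw [← hst]⟩
        have hsuf_x : x <:+ pw x (k0+1) := ⟨pw x k0, (pw_succ' x k0).symm⟩
        obtain ⟨t2, rfl⟩ := List.suffix_of_suffix_length_le hsuf_x hsuf_t ht
        have hkey : s ++ l ++ t2 = pw x k0 :=
          List.append_cancel_right
            (show (s ++ l ++ t2) ++ x = pw x k0 ++ x by
              rw [List.append_assoc (s ++ l) t2 x, ← pw_succ']; exact hst)
        obtain ⟨k', h1, h2⟩ := ih k0 (by omega) l ⟨s, t2, hkey⟩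
        exact ⟨k', h1, h2⟩

lemma count_bound (x l : List A) (k : ℕ)
    (hk : k * x.length ≤ l.length + 2 * x.length)
    (hl : l <:+: pw x k) (b : A) :
    |(x.length : ℤ) * l.count b - (l.length : ℤ) * x.count b| ≤ 4 * (x.length : ℤ)^2 := by
  obtain ⟨s, t, hst⟩ := hl
  have hcnt : s.count b + (l.count b + t.count b) = k * x.count b := by
    have := congrArg (List.count b) hst
    simpa [List.count_append, count_pw] using this
  have hlen : s.length + (l.length + t.length) = k * x.length := by
    have := congrArg List.length hst
    simpa [length_pw] using this
  have h1 : s.count b ≤ s.length := List.count_le_length (a := b) (l := s)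
  have h2 : t.count b ≤ t.length := List.count_le_length (a := b) (l := t)
  have h3 : x.count b ≤ x.length := List.count_le_length (a := b) (l := x)
  have h5 : l.count b ≤ l.length := List.count_le_length (a := b) (l := l)
  have h4 : s.length + t.length ≤ 2 * x.length := by
    generalize hK : k * x.length = K at hlen hk
    omega
  rw [abs_le]
  constructor <;>
  · zify at hcnt hlen h1 h2 h3 h4 h5 hk
    nlinarith [sq_nonneg ((x.length : ℤ)), Int.natCast_nonneg x.length,
      Int.natCast_nonneg (s.count b), Int.natCast_nonneg (t.count b),
      Int.natCast_nonneg (x.count b), Int.natCast_nonneg s.length, Int.natCast_nonneg t.length,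
      Int.natCast_nonneg l.length, Int.natCast_nonneg (l.count b)]



section Fin
variable {A : Type} [Fintype A] [DecidableEq A]



def Mm (φ : Monoid.End (FreeMonoid A)) : Matrix A A ℤ :=
  Matrix.of fun a b => ((φ (FreeMonoid.of a)).toList.count b : ℤ)

lemma cnt_phi (φ : Monoid.End (FreeMonoid A)) (u : FreeMonoid A) (b : A) :
    ((φ u).toList.count b : ℤ) = ∑ a, (u.toList.count a : ℤ) * Mm φ a b := by
  induction u using FreeMonoid.recOn with
  | one => simp [map_one, show (1 : FreeMonoid A).toList = [] from rfl]
  | of_mul x xs ih =>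
      rw [map_mul]
      have h1 : ((φ (FreeMonoid.of x) * φ xs).toList.count b : ℤ)
          = ((φ (FreeMonoid.of x)).toList.count b : ℤ) + ((φ xs).toList.count b : ℤ) := by
        push_cast [show (φ (FreeMonoid.of x) * φ xs).toList
            = (φ (FreeMonoid.of x)).toList ++ (φ xs).toList from rfl, List.count_append]
        ring
      have h2 : ∀ a : A, ((FreeMonoid.of x * xs).toList.count a : ℤ)
          = (if x = a then 1 else 0) + (xs.toList.count a : ℤ) := by
        intro a
        push_cast [show (FreeMonoid.of x * xs).toList = x :: xs.toList from rfl, List.count_cons, beq_iff_eq]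
        ring
      rw [h1, ih]
      simp only [h2, add_mul, Finset.sum_add_distrib, ite_mul, one_mul, zero_mul,
        Finset.sum_ite_eq, Finset.mem_univ, if_true]
      rfl

lemma cnt_pow (φ : Monoid.End (FreeMonoid A)) (m : ℕ) (a : A) (b : A) :
    (((φ^(m+1)) (FreeMonoid.of a)).toList.count b : ℤ)
      = ∑ c, (((φ^m) (FreeMonoid.of a)).toList.count c : ℤ) * Mm φ c b := by
  rw [show (φ^(m+1)) (FreeMonoid.of a) = φ ((φ^m) (FreeMonoid.of a)) by rw [pow_succ']; rfl]
  exact cnt_phi φ _ b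

lemma Mpow (φ : Monoid.End (FreeMonoid A)) :
    ∀ m (a b : A), ((Mm φ)^m) a b = (((φ^m) (FreeMonoid.of a)).toList.count b : ℤ) := by
  intro m
  induction m with
  | zero =>
      intro a b
      rw [pow_zero, pow_zero, Matrix.one_apply]
      rw [show (1 : Monoid.End (FreeMonoid A)) (FreeMonoid.of a) = FreeMonoid.of a from rfl,
        show (FreeMonoid.of a).toList = [a] from rfl]
      by_cases h : a = b <;> simp [List.count_cons, h]
  | succ m ih =>
      intro a b
      rw [pow_succ, Matrix.mul_apply, cnt_pow]
      exact Finset.sum_congr rfl fun c _ => by rw [ih a c]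

lemma vecMul_apply (N : Matrix A A ℤ) (v : A → ℤ) (b : A) :
    Matrix.vecMul v N b = ∑ a, v a * N a b := by
  simp [Matrix.vecMul, dotProduct]

lemma iterA (N : Matrix A A ℤ) (v : A → ℤ) (s t : ℤ)
    (h : t • Matrix.vecMul v N = s • v) :
    ∀ j, t^j • Matrix.vecMul v (N^j) = s^j • v := by
  have step : ∀ j, t • Matrix.vecMul v (N^(j+1)) = s • Matrix.vecMul v (N^j) := by
    intro j
    calc t • Matrix.vecMul v (N^(j+1))
        = Matrix.vecMul (t • Matrix.vecMul v N) (N^j) := by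
          rw [Matrix.smul_vecMul, Matrix.vecMul_vecMul, ← pow_succ']
      _ = Matrix.vecMul (s • v) (N^j) := by rw [h]
      _ = s • Matrix.vecMul v (N^j) := by rw [Matrix.smul_vecMul]
  intro j
  induction j with
  | zero => simp
  | succ j ih =>
      calc t^(j+1) • Matrix.vecMul v (N^(j+1))
          = t^j • (t • Matrix.vecMul v (N^(j+1))) := by rw [smul_smul, ← pow_succ]
        _ = t^j • (s • Matrix.vecMul v (N^j)) := by rw [step j]
        _ = s • (t^j • Matrix.vecMul v (N^j)) := by rw [smul_comm]
        _ = s • (s^j • v) := by rw [ih]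
        _ = s^(j+1) • v := by rw [smul_smul, ← pow_succ']

lemma iterB (N : Matrix A A ℤ) (v : A → ℤ) (s c : ℤ)
    (h : c • v = s • Matrix.vecMul v N) :
    ∀ j, c^j • v = s^j • Matrix.vecMul v (N^j) := by
  have step : ∀ j, c • Matrix.vecMul v (N^j) = s • Matrix.vecMul v (N^(j+1)) := by
    intro j
    calc c • Matrix.vecMul v (N^j) = Matrix.vecMul (c • v) (N^j) := by rw [Matrix.smul_vecMul]
      _ = Matrix.vecMul (s • Matrix.vecMul v N) (N^j) := by rw [h]
      _ = s • Matrix.vecMul v (N^(j+1)) := by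
          rw [Matrix.smul_vecMul, Matrix.vecMul_vecMul, ← pow_succ']
  intro j
  induction j with
  | zero => simp
  | succ j ih =>
      calc c^(j+1) • v = c • (c^j • v) := by rw [smul_smul, ← pow_succ']
        _ = c • (s^j • Matrix.vecMul v (N^j)) := by rw [ih]
        _ = s^j • (c • Matrix.vecMul v (N^j)) := by rw [smul_comm]
        _ = s^j • (s • Matrix.vecMul v (N^(j+1))) := by rw [step j]
        _ = s^(j+1) • Matrix.vecMul v (N^(j+1)) := by rw [smul_smul, ← pow_succ]




lemma cross_aux (v r : A → ℤ) (Lm : ℕ → ℤ) (P D : ℤ)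
    (hLnn : ∀ m, 0 ≤ Lm m)
    (hFb : ∀ m (b : A), |Lm m * r b - Lm (m+1) * v b| ≤ D)
    (hvP : ∀ b, |v b| ≤ P)
    (hgrow : ∀ N : ℤ, ∃ m, N < Lm m) :
    ∀ b c, v c * r b = v b * r c := by
  intro b c
  obtain ⟨m, hm⟩ := hgrow (2 * (P * D))
  by_contra hne
  have h1 : Lm m * (v c * r b - v b * r c)
      = v c * (Lm m * r b - Lm (m+1) * v b) - v b * (Lm m * r c - Lm (m+1) * v c) := by
    ring
  have hP0 : 0 ≤ P := le_trans (abs_nonneg _) (hvP b)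
  have hD0 : 0 ≤ D := le_trans (abs_nonneg _) (hFb m b)
  have h2 : |Lm m * (v c * r b - v b * r c)| ≤ 2 * (P * D) := by
    rw [h1]
    calc |v c * (Lm m * r b - Lm (m+1) * v b) - v b * (Lm m * r c - Lm (m+1) * v c)|
        ≤ |v c * (Lm m * r b - Lm (m+1) * v b)| + |v b * (Lm m * r c - Lm (m+1) * v c)| :=
          abs_sub _ _
      _ = |v c| * |Lm m * r b - Lm (m+1) * v b| + |v b| * |Lm m * r c - Lm (m+1) * v c| := by
          rw [abs_mul, abs_mul]
      _ ≤ P * D + P * D := by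
          gcongr
          · exact hvP c
          · exact hFb m b
          · exact hvP b
          · exact hFb m c
      _ = 2 * (P * D) := by ring
  have h3 : (1 : ℤ) ≤ |v c * r b - v b * r c| := Int.one_le_abs (sub_ne_zero.mpr hne)
  have h4 : Lm m ≤ |Lm m * (v c * r b - v b * r c)| := by
    rw [abs_mul, abs_of_nonneg (hLnn m)]
    nlinarith [hLnn m]
  linarith

lemma length_ge_two_of_two_mem {l : List A} {b1 b2 : A} (hne : b1 ≠ b2)
    (h1 : b1 ∈ l) (h2 : b2 ∈ l) : 2 ≤ l.length := by
  have hsub : ({b1, b2} : Finset A) ⊆ l.toFinset := by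
    intro a ha
    simp only [Finset.mem_insert, Finset.mem_singleton] at ha
    rcases ha with rfl | rfl <;> simpa [List.mem_toFinset]
  calc 2 = ({b1, b2} : Finset A).card := (Finset.card_pair hne).symm
    _ ≤ l.toFinset.card := Finset.card_le_card hsub
    _ ≤ l.length := l.toFinset_card_le

lemma len_phi_ge (φ : Monoid.End (FreeMonoid A)) (n0 : ℕ)
    (hpos : ∀ x : A, 2 ≤ ((φ^n0) (FreeMonoid.of x)).toList.length) :
    ∀ u : FreeMonoid A, 2 * u.toList.length ≤ ((φ^n0) u).toList.length := by
  intro u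
  induction u using FreeMonoid.recOn with
  | one => simp [map_one, show (1 : FreeMonoid A).toList = [] from rfl]
  | of_mul x xs ih =>
      rw [map_mul (φ^n0) (FreeMonoid.of x) xs]
      have e1 : ((φ^n0) (FreeMonoid.of x) * (φ^n0) xs).toList.length
          = ((φ^n0) (FreeMonoid.of x)).toList.length + ((φ^n0) xs).toList.length := by
        rw [show ((φ^n0) (FreeMonoid.of x) * (φ^n0) xs).toList
          = ((φ^n0) (FreeMonoid.of x)).toList ++ ((φ^n0) xs).toList from rfl,
          List.length_append]
      have e2 : (FreeMonoid.of x * xs).toList.length = 1 + xs.toList.length := by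
        rw [show (FreeMonoid.of x * xs).toList = x :: xs.toList from rfl]; simp; omega
      rw [e1, e2]
      have := hpos x
      omega


lemma sum_count (l : List A) : ∑ b, (l.count b : ℤ) = l.length := by
  induction l with
  | nil => simp
  | cons a l ih =>
      have h : ∀ b : A, ((a :: l).count b : ℤ) = (l.count b : ℤ) + if a = b then 1 else 0 := by
        intro b; push_cast [List.count_cons, beq_iff_eq]; ring
      simp only [h, Finset.sum_add_distrib, ih, Finset.sum_ite_eq, Finset.mem_univ, if_true,
        List.length_cons]
      push_cast; ring

end Fin
end AperiodicPrim


/-- A primitive substitution on an alphabet with at least two letters that is unimodular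
(the determinant of its incidence matrix is `±1`) is aperiodic: no nonempty word `w` is
such that every word of the language of the substitution is a factor of a power of `w`. -/
theorem aperiodic_of_primitive_unimodular {A : Type} [Fintype A] [DecidableEq A]
    (hA : 2 ≤ Fintype.card A) (φ : Monoid.End (FreeMonoid A))
    (hprim : ∃ n : ℕ, 1 ≤ n ∧ ∀ a b : A, IsFactor (FreeMonoid.of b) ((φ ^ n) (FreeMonoid.of a)))
    (hunimod :
      (Matrix.det (fun a b : A =>
          ((FreeMonoid.toList (φ (FreeMonoid.of a))).count b : ℤ)) = 1 ∨
        Matrix.det (fun a b : A =>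
          ((FreeMonoid.toList (φ (FreeMonoid.of a))).count b : ℤ)) = -1)) :
    ¬ ∃ w : FreeMonoid A, w ≠ 1 ∧
        ∀ u : FreeMonoid A,
          (∃ (n : ℕ) (a : A), IsFactor u ((φ ^ n) (FreeMonoid.of a))) →
            ∃ k : ℕ, IsFactor u (w ^ k) := by
  classical
  open AperiodicPrim in
  rintro ⟨w, hw1, hper⟩
  obtain ⟨n0, hn0, hfac⟩ := hprim
  obtain ⟨b1, b2, hb12⟩ := Fintype.exists_pair_of_one_lt_card (by omega : 1 < Fintype.card A)
  obtain ⟨a0⟩ : Nonempty A := ⟨b1⟩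
  set x : List A := w.toList with hxdef
  have hxne : x ≠ [] := by
    intro h
    exact hw1 (FreeMonoid.toList.injective (h : w.toList = (1 : FreeMonoid A).toList))
  have hp1 : 1 ≤ x.length := List.length_pos_iff.mpr hxne
  set P : ℤ := (x.length : ℤ) with hPdef
  have hP1 : (1:ℤ) ≤ P := by rw [hPdef]; exact_mod_cast hp1
  set v : A → ℤ := fun b => (x.count b : ℤ) with hvdef
  have hv0 : ∀ b, 0 ≤ v b := fun b => Int.natCast_nonneg _
  have hvsum : ∑ b, v b = P := AperiodicPrim.sum_count x
  have hvP : ∀ b, v b ≤ P := fun b => by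
    show ((x.count b : ℕ) : ℤ) ≤ ((x.length : ℕ) : ℤ)
    exact_mod_cast List.count_le_length (a := b) (l := x)
  -- the orbit of a0
  set U : ℕ → FreeMonoid A := fun m => (φ^m) (FreeMonoid.of a0) with hUdef
  set Lm : ℕ → ℤ := fun m => ((U m).toList.length : ℤ) with hLdef
  have hLnn : ∀ m, 0 ≤ Lm m := fun m => Int.natCast_nonneg _
  set C : ℤ := 4 * P^2 with hCdef
  have hC0 : 0 ≤ C := by positivity
  have hbd : ∀ m (b : A), |P * ((U m).toList.count b : ℤ) - Lm m * v b| ≤ C := by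
    intro m b
    obtain ⟨k, hk⟩ := hper (U m) ⟨m, a0, 1, 1, by rw [one_mul, mul_one]⟩
    have hinf : (U m).toList <:+: AperiodicPrim.pw x k := by
      have h := AperiodicPrim.isFactor_toList hk
      rwa [AperiodicPrim.toList_pow] at h
    obtain ⟨k', h1, h2⟩ := AperiodicPrim.trim x k _ hinf
    exact AperiodicPrim.count_bound x _ k' h1 h2 b
  set M : Matrix A A ℤ := AperiodicPrim.Mm φ with hMdef
  have hM0 : ∀ a b, 0 ≤ M a b := fun a b => Int.natCast_nonneg _
  set S : ℤ := ∑ a, ∑ b, M a b with hSdef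
  have hS0 : 0 ≤ S := Finset.sum_nonneg fun a _ => Finset.sum_nonneg fun b _ => hM0 a b
  have hcol : ∀ b, ∑ a, M a b ≤ S :=
    fun b => Finset.sum_le_sum fun a _ =>
      Finset.single_le_sum (fun b' _ => hM0 a b') (Finset.mem_univ b)
  set D : ℤ := C + C * S with hDdef
  set r : A → ℤ := fun b => ∑ a, v a * M a b with hrdef
  have hrb : ∀ b, r b = ∑ a, v a * M a b := fun b => rfl
  have hr0 : ∀ b, 0 ≤ r b := fun b =>
    Finset.sum_nonneg fun a _ => mul_nonneg (hv0 a) (hM0 a b)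
  have hFb : ∀ m (b : A), |Lm m * r b - Lm (m+1) * v b| ≤ D := by
    intro m b
    have e1 : (((U (m+1))).toList.count b : ℤ) = ∑ c, ((U m).toList.count c : ℤ) * M c b :=
      AperiodicPrim.cnt_pow φ m a0 b
    have e2 : ∑ a, (P * ((U m).toList.count a : ℤ) - Lm m * v a) * M a b
        = P * (∑ a, ((U m).toList.count a : ℤ) * M a b) - Lm m * (∑ a, v a * M a b) := by
      rw [Finset.mul_sum, Finset.mul_sum, ← Finset.sum_sub_distrib]
      exact Finset.sum_congr rfl fun a _ => by ring
    have id1 : Lm m * r b - Lm (m+1) * v b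
        = (P * ((U (m+1)).toList.count b : ℤ) - Lm (m+1) * v b)
          - ∑ a, (P * ((U m).toList.count a : ℤ) - Lm m * v a) * M a b := by
      linear_combination Lm m * hrb b - P * e1 + e2
    rw [id1]
    have t1 : |∑ a, (P * ((U m).toList.count a : ℤ) - Lm m * v a) * M a b| ≤ C * S := by
      calc |∑ a, (P * ((U m).toList.count a : ℤ) - Lm m * v a) * M a b|
          ≤ ∑ a, |(P * ((U m).toList.count a : ℤ) - Lm m * v a) * M a b| :=
            Finset.abs_sum_le_sum_abs _ _
        _ = ∑ a, |P * ((U m).toList.count a : ℤ) - Lm m * v a| * M a b :=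
            Finset.sum_congr rfl fun a _ => by rw [abs_mul, abs_of_nonneg (hM0 a b)]
        _ ≤ ∑ a, C * M a b :=
            Finset.sum_le_sum fun a _ => mul_le_mul_of_nonneg_right (hbd m a) (hM0 a b)
        _ = C * ∑ a, M a b := (Finset.mul_sum _ _ _).symm
        _ ≤ C * S := mul_le_mul_of_nonneg_left (hcol b) hC0
    calc |(P * ((U (m+1)).toList.count b : ℤ) - Lm (m+1) * v b)
          - ∑ a, (P * ((U m).toList.count a : ℤ) - Lm m * v a) * M a b|
        ≤ |P * ((U (m+1)).toList.count b : ℤ) - Lm (m+1) * v b|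
          + |∑ a, (P * ((U m).toList.count a : ℤ) - Lm m * v a) * M a b| := abs_sub _ _
      _ ≤ C + C * S := add_le_add (hbd (m+1) b) t1
  -- growth
  have hpos : ∀ y : A, 2 ≤ ((φ^n0) (FreeMonoid.of y)).toList.length := by
    intro y
    have hm : ∀ b : A, b ∈ ((φ^n0) (FreeMonoid.of y)).toList := by
      intro b
      have h := AperiodicPrim.isFactor_toList (hfac y b)
      exact h.subset (show b ∈ (FreeMonoid.of b).toList from by
        rw [show (FreeMonoid.of b).toList = [b] from rfl]; simp)
    exact AperiodicPrim.length_ge_two_of_two_mem hb12 (hm b1) (hm b2)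
  have hdouble := AperiodicPrim.len_phi_ge φ n0 hpos
  have hpow2 : ∀ k, 2^k ≤ ((φ^(k*n0)) (FreeMonoid.of a0)).toList.length := by
    intro k
    induction k with
    | zero =>
        rw [show (φ^(0*n0)) (FreeMonoid.of a0) = FreeMonoid.of a0 from by rw [Nat.zero_mul, pow_zero]; rfl]
        simp [show (FreeMonoid.of a0).toList = [a0] from rfl]
    | succ k ih =>
        have he : (φ^((k+1)*n0)) (FreeMonoid.of a0) = (φ^n0) ((φ^(k*n0)) (FreeMonoid.of a0)) := by
          rw [show (k+1)*n0 = n0 + k*n0 by ring, pow_add]; rfl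
        rw [he]
        have h2 := hdouble ((φ^(k*n0)) (FreeMonoid.of a0))
        have : 2^(k+1) = 2 * 2^k := by ring
        omega
  have hgrow : ∀ N : ℤ, ∃ m, N < Lm m := by
    intro N
    refine ⟨(N.toNat + 1) * n0, ?_⟩
    have h2 := hpow2 (N.toNat + 1)
    have h3 : N.toNat + 1 < 2^(N.toNat + 1) := Nat.lt_two_pow_self
    have h4 := Int.self_le_toNat N
    show N < ((((φ^((N.toNat + 1) * n0)) (FreeMonoid.of a0)).toList.length : ℕ) : ℤ)
    have : N.toNat + 1 ≤ ((φ^((N.toNat + 1) * n0)) (FreeMonoid.of a0)).toList.length := by omega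
    calc N ≤ (N.toNat : ℤ) := h4
      _ < ((N.toNat + 1 : ℕ) : ℤ) := by push_cast; omega
      _ ≤ _ := by exact_mod_cast this
  have hvPabs : ∀ b, |v b| ≤ P := fun b => by rw [abs_of_nonneg (hv0 b)]; exact hvP b
  have hcross := AperiodicPrim.cross_aux v r Lm P D hLnn hFb hvPabs hgrow
  -- pick c0 with v c0 ≠ 0
  have hsumne : ∑ b, v b ≠ 0 := by rw [hvsum]; omega
  obtain ⟨c0, _, hc0⟩ := Finset.exists_ne_zero_of_sum_ne_zero hsumne
  set t : ℤ := v c0 with htdef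
  set s : ℤ := r c0 with hsdef
  have ht1 : 1 ≤ t := by have := hv0 c0; omega
  have hs0 : 0 ≤ s := hr0 c0
  have hkey : ∀ b, t * r b = s * v b := fun b => by linear_combination hcross b c0
  -- reduce the fraction
  set d : ℕ := Int.gcd s t with hddef
  have hd0 : 0 < d := Int.gcd_pos_iff.mpr (Or.inr (by omega))
  have hdz : ((d:ℤ)) ≠ 0 := by exact_mod_cast hd0.ne'
  have hd1 : (1:ℤ) ≤ (d:ℤ) := by exact_mod_cast hd0
  set s1 : ℤ := s / (d:ℤ) with hs1def
  set t1 : ℤ := t / (d:ℤ) with ht1def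
  have hs1 : (d:ℤ) * s1 = s := Int.mul_ediv_cancel' (Int.gcd_dvd_left _ _)
  have ht1e : (d:ℤ) * t1 = t := Int.mul_ediv_cancel' (Int.gcd_dvd_right _ _)
  have hcop : IsCoprime s1 t1 :=
    Int.isCoprime_iff_gcd_eq_one.mpr (Int.gcd_div_gcd_div_gcd hd0)
  have ht1pos : 1 ≤ t1 := by nlinarith
  have hs1nn : 0 ≤ s1 := by nlinarith
  have hkey1 : ∀ b, t1 * r b = s1 * v b := by
    intro b
    apply mul_left_cancel₀ hdz
    linear_combination r b * ht1e - v b * hs1 + hkey b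
  -- entries of M^n0 are ≥ 1
  have hMn0 : ∀ a b, 1 ≤ (M^n0) a b := by
    intro a b
    rw [hMdef, AperiodicPrim.Mpow φ n0 a b]
    have hmem : b ∈ ((φ^n0) (FreeMonoid.of a)).toList :=
      (AperiodicPrim.isFactor_toList (hfac a b)).subset
        (show b ∈ (FreeMonoid.of b).toList from by
          rw [show (FreeMonoid.of b).toList = [b] from rfl]; simp)
    exact_mod_cast List.count_pos_iff.mpr hmem
  have hvec1 : t1 • Matrix.vecMul v M = s1 • v := by
    funext b
    simp only [Pi.smul_apply, smul_eq_mul]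
    rw [AperiodicPrim.vecMul_apply, ← hrb b]
    exact hkey1 b
  -- growth forces t1 < s1
  have hst : t1 < s1 := by
    by_contra hle
    push_neg at hle
    have hiterA := AperiodicPrim.iterA M v s1 t1 hvec1 n0
    have hball : ∀ b, ∑ a, v a ≤ v b := by
      intro b
      have h1 : t1^n0 * Matrix.vecMul v (M^n0) b = s1^n0 * v b := by
        have h := congrFun hiterA b
        simpa [smul_eq_mul] using h
      have hpowpos : (0:ℤ) < t1^n0 := pow_pos (by omega) n0
      have h2 : s1^n0 ≤ t1^n0 := pow_le_pow_left₀ hs1nn hle n0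
      have hge : ∑ a, v a ≤ Matrix.vecMul v (M^n0) b := by
        rw [AperiodicPrim.vecMul_apply]
        exact Finset.sum_le_sum fun a _ => le_mul_of_one_le_right (hv0 a) (hMn0 a b)
      have h3 : t1^n0 * (∑ a, v a) ≤ t1^n0 * v b := by
        calc t1^n0 * (∑ a, v a) ≤ t1^n0 * Matrix.vecMul v (M^n0) b :=
              mul_le_mul_of_nonneg_left hge hpowpos.le
          _ = s1^n0 * v b := h1
          _ ≤ t1^n0 * v b := mul_le_mul_of_nonneg_right h2 (hv0 b)
      exact le_of_mul_le_mul_left h3 hpowpos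
    have hpair : v b1 + v b2 ≤ ∑ a, v a := by
      rw [← Finset.sum_pair hb12]
      exact Finset.sum_le_sum_of_subset_of_nonneg (Finset.subset_univ _) (fun i _ _ => hv0 i)
    have hb1' := hball b1
    have hb2' := hball b2
    linarith
  have hs12 : 2 ≤ s1 := by omega
  -- determinant
  have hdet : M.det = 1 ∨ M.det = -1 := hunimod
  have hee : M.det * M.det = 1 := by rcases hdet with h | h <;> rw [h] <;> norm_num
  have hvec2 : (t1 * M.det) • v = s1 • Matrix.vecMul v M.adjugate := by
    have h1 := congrArg (fun z => Matrix.vecMul z M.adjugate) hvec1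
    rw [Matrix.smul_vecMul, Matrix.smul_vecMul, Matrix.vecMul_vecMul, Matrix.mul_adjugate] at h1
    have h2 : Matrix.vecMul v (M.det • (1 : Matrix A A ℤ)) = M.det • v := by simp
    rw [h2, smul_smul] at h1
    exact h1
  have hiterB := AperiodicPrim.iterB M.adjugate v s1 (t1 * M.det) hvec2
  have hzero : ∀ b, v b = 0 := by
    intro b
    by_contra hvb
    set j : ℕ := (v b).natAbs with hjdef
    have hdvd0 : s1^j ∣ (t1 * M.det)^j * v b := by
      refine ⟨Matrix.vecMul v (M.adjugate^j) b, ?_⟩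
      have h := congrFun (hiterB j) b
      simpa [smul_eq_mul] using h
    have heps : M.det^j * (t1 * M.det)^j = t1^j := by
      rw [← mul_pow, show M.det * (t1 * M.det) = t1 * (M.det * M.det) by ring, hee, mul_one]
    have hdvd1 : s1^j ∣ t1^j * v b := by
      have he : t1^j * v b = M.det^j * ((t1 * M.det)^j * v b) := by
        rw [← mul_assoc, heps]
      rw [he]
      exact Dvd.dvd.mul_left hdvd0 _
    have hdvd2 : s1^j ∣ v b := (hcop.pow).dvd_of_dvd_mul_left hdvd1
    have habs : s1^j ≤ |v b| := Int.le_of_dvd (abs_pos.mpr hvb) ((dvd_abs _ _).mpr hdvd2)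
    have h2j : (2:ℤ)^j ≤ s1^j := pow_le_pow_left₀ (by norm_num) hs12 j
    have hj : |v b| = (j : ℤ) := by rw [Int.abs_eq_natAbs]
    have hlt : (j:ℤ) < 2^j := by exact_mod_cast Nat.lt_two_pow_self
    linarith
  have : ∑ b, v b = 0 := Finset.sum_eq_zero fun b _ => hzero b
  omega
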